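/- arXiv:math/0210201 — 5 statements merged into one kernel-verified Lean document; each statement's English description precedes it below -/
import Mathlib

section
/- For every integer m ≥ 2 and every integer k with 1 ≤ k < m, the traces of the k-th powers of consecutive Polynacci matrices agree: trace(A_m^k) = trace(A_{m−1}^k). -/
/-- The Polynacci matrix `A_m`: first column all ones, first superdiagonal all ones,
all other entries zero (0-indexed). -/
def polyA (m : ℕ) : Matrix (Fin m) (Fin m) ℤ :=
  Matrix.of fun i j => if j.val = 0 then 1 else if j.val = i.val + 1 then 1 else 0

lemma polyA_pow_entry (n : ℕ) : ∀ (k : ℕ), k ≤ n → ∀ (i j : Fin n),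
    i.val + k ≤ n + j.val →
    (polyA n ^ k) i j =
      (if j.val = i.val + k then 1 else 0) +
      (if j.val + 1 ≤ k then (2:ℤ) ^ (k - j.val - 1) else 0) := by
  intro k
  induction k with
  | zero =>
      intro _ i j _
      simp only [pow_zero, Matrix.one_apply, Nat.add_zero]
      by_cases hij : i = j
      · subst hij; simp
      · have : ¬ (j.val = i.val) := fun h => hij (Fin.ext h.symm)
        simp [hij, this]
  | succ k ih =>
      intro hk i j hreg
      have hn0 : 0 < n := i.pos
      have hk' : k ≤ n := Nat.le_of_succ_le hk
      rw [pow_succ', Matrix.mul_apply]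
      by_cases hil : i.val + 1 < n
      · set i1 : Fin n := ⟨i.val + 1, hil⟩ with hi1
        have h01 : (⟨0, hn0⟩ : Fin n) ≠ i1 := Fin.ne_of_val_ne (by simp [hi1])
        have hterm : ∀ l : Fin n, polyA n i l * (polyA n ^ k) l j =
            (if l = (⟨0, hn0⟩ : Fin n) then (polyA n ^ k) ⟨0, hn0⟩ j else 0) +
            (if l = i1 then (polyA n ^ k) i1 j else 0) := by
          intro l
          by_cases hl0 : l.val = 0
          · have hl : l = (⟨0, hn0⟩ : Fin n) := Fin.ext hl0
            rw [hl, if_pos rfl, if_neg h01]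
            simp [polyA]
          · by_cases hl1 : l.val = i.val + 1
            · have hl : l = i1 := Fin.ext hl1
              rw [hl, if_pos rfl, if_neg h01.symm]
              simp [polyA, hi1]
            · have hne1 : l ≠ (⟨0, hn0⟩ : Fin n) := Fin.ne_of_val_ne (by simpa using hl0)
              have hne2 : l ≠ i1 := Fin.ne_of_val_ne (by simpa [hi1] using hl1)
              rw [if_neg hne1, if_neg hne2]
              simp [polyA, hl0, hl1]
        rw [Finset.sum_congr rfl fun l _ => hterm l, Finset.sum_add_distrib]
        rw [Finset.sum_ite_eq' Finset.univ (⟨0, hn0⟩ : Fin n)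
            (fun _ => (polyA n ^ k) ⟨0, hn0⟩ j)]
        rw [Finset.sum_ite_eq' Finset.univ i1 (fun _ => (polyA n ^ k) i1 j)]
        simp only [Finset.mem_univ, if_true]
        rw [ih hk' ⟨0, hn0⟩ j (by simp; omega), ih hk' i1 j (by simp [hi1]; omega)]
        simp only [hi1]
        rcases lt_trichotomy j.val k with hj | hj | hj
        · rw [if_neg (by omega : ¬ (j.val = 0 + k)),
            if_pos (by omega : j.val + 1 ≤ k),
            if_neg (by omega : ¬ (j.val = i.val + 1 + k)),
            if_neg (by omega : ¬ (j.val = i.val + (k + 1))),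
            if_pos (by omega : j.val + 1 ≤ k + 1),
            (by omega : k + 1 - j.val - 1 = (k - j.val - 1) + 1), pow_succ]
          ring
        · rw [if_pos (by omega : j.val = 0 + k),
            if_neg (by omega : ¬ (j.val + 1 ≤ k)),
            if_neg (by omega : ¬ (j.val = i.val + 1 + k)),
            if_neg (by omega : ¬ (j.val = i.val + (k + 1))),
            if_pos (by omega : j.val + 1 ≤ k + 1),
            (by omega : k + 1 - j.val - 1 = 0), pow_zero]
          ring
        · rw [if_neg (by omega : ¬ (j.val = 0 + k)),
            if_neg (by omega : ¬ (j.val + 1 ≤ k)),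
            if_neg (by omega : ¬ (j.val + 1 ≤ k + 1)),
            (by omega : i.val + 1 + k = i.val + (k + 1))]
          ring
      · -- i.val + 1 = n
        have hin : i.val + 1 = n := by omega
        have hjk : k ≤ j.val := by omega
        have hterm : ∀ l : Fin n, polyA n i l * (polyA n ^ k) l j =
            (if l = (⟨0, hn0⟩ : Fin n) then (polyA n ^ k) ⟨0, hn0⟩ j else 0) := by
          intro l
          by_cases hl0 : l.val = 0
          · have hl : l = (⟨0, hn0⟩ : Fin n) := Fin.ext hl0
            rw [hl, if_pos rfl]
            simp [polyA]
          · have hl1 : ¬ (l.val = i.val + 1) := by have := l.isLt; omega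
            have hne : l ≠ (⟨0, hn0⟩ : Fin n) := Fin.ne_of_val_ne (by simpa using hl0)
            rw [if_neg hne]
            simp [polyA, hl0, hl1]
        rw [Finset.sum_congr rfl fun l _ => hterm l]
        rw [Finset.sum_ite_eq' Finset.univ (⟨0, hn0⟩ : Fin n)
            (fun _ => (polyA n ^ k) ⟨0, hn0⟩ j)]
        simp only [Finset.mem_univ, if_true]
        rw [ih hk' ⟨0, hn0⟩ j (by simp; omega)]
        rw [if_neg (by have := j.isLt; omega : ¬ (j.val = i.val + (k + 1))),
          if_neg (by omega : ¬ (j.val + 1 ≤ k))]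
        by_cases h1 : j.val = 0 + k
        · rw [if_pos h1, if_pos (by omega : j.val + 1 ≤ k + 1),
            (by omega : k + 1 - j.val - 1 = 0), pow_zero]
          ring
        · rw [if_neg h1, if_neg (by omega : ¬ (j.val + 1 ≤ k + 1))]

lemma geom_two (k : ℕ) : ∑ i ∈ Finset.range k, (2:ℤ) ^ i = 2 ^ k - 1 := by
  induction k with
  | zero => simp
  | succ k ih => rw [Finset.sum_range_succ, ih, pow_succ]; ring

lemma polyA_trace_eq (n k : ℕ) (hk1 : 1 ≤ k) (hk : k ≤ n) :
    ((polyA n) ^ k).trace = 2 ^ k - 1 := by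
  rw [Matrix.trace]
  have hdiag : ∀ i : Fin n, Matrix.diag ((polyA n) ^ k) i =
      if i.val + 1 ≤ k then (2:ℤ) ^ (k - i.val - 1) else 0 := by
    intro i
    rw [Matrix.diag_apply, polyA_pow_entry n k hk i i (by omega)]
    have : ¬ (i.val = i.val + k) := by omega
    simp [this]; omega
  rw [Finset.sum_congr rfl fun i _ => hdiag i]
  rw [Fin.sum_univ_eq_sum_range (fun i => if i + 1 ≤ k then (2:ℤ) ^ (k - i - 1) else 0)]
  rw [← Finset.sum_subset (Finset.range_subset_range.mpr hk)
      (fun x _ hx => by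
        have : ¬ (x + 1 ≤ k) := by simp at hx ⊢; omega
        simp [this])]
  have hcong : ∀ x ∈ Finset.range k,
      (if x + 1 ≤ k then (2:ℤ) ^ (k - x - 1) else 0) = (2:ℤ) ^ (k - 1 - x) := by
    intro x hx
    simp only [Finset.mem_range] at hx
    have h1 : x + 1 ≤ k := hx
    have h2 : k - x - 1 = k - 1 - x := by omega
    simp [h1, h2]
  rw [Finset.sum_congr rfl hcong, Finset.sum_range_reflect (fun i => (2:ℤ) ^ i) k,
    geom_two]

theorem polyA_trace_pow_stable (m : ℕ) (hm : 2 ≤ m) (k : ℕ) (hk1 : 1 ≤ k) (hk2 : k < m) :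
    ((polyA m) ^ k).trace = ((polyA (m - 1)) ^ k).trace := by
  rw [polyA_trace_eq m k hk1 (by omega), polyA_trace_eq (m - 1) k hk1 (by omega)]
end

section
/- For every integer m ≥ 1 and every integer k with 1 ≤ k ≤ m, trace(A_m^k) = trace(A_k^k). -/
/-- Auxiliary entry function: the value of `(polyA m ^ k) i j` when `j < k`,
with `n = k - j`, `c = m - i`. -/
def polyF (n c : ℕ) : ℤ := 2 ^ (n - 1) - (if n ≤ c then 0 else 2 ^ (n - 1 - c))

lemma sumF (c : ℕ) (hc : 1 ≤ c) (k : ℕ) :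
    (∑ n ∈ Finset.range k, polyF (n + 1) c) + (if k < c then 1 else 0) = polyF (k + 1) c := by
  induction k with
  | zero =>
    simp only [Finset.range_zero, Finset.sum_empty, zero_add, polyF]
    rw [if_pos (show 0 < c by omega), if_pos hc]
    norm_num
  | succ k ih =>
    rw [Finset.sum_range_succ]
    have h1 : (∑ n ∈ Finset.range k, polyF (n + 1) c)
        = polyF (k + 1) c - (if k < c then 1 else 0) := by linarith [ih]
    rw [h1]
    unfold polyF
    simp only [Nat.add_sub_cancel]
    rcases lt_trichotomy (k + 1) c with h | h | h
    · rw [if_pos (by omega), if_pos (by omega), if_pos (by omega), if_pos (by omega)]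
      ring
    · rw [if_pos (by omega), if_pos (by omega), if_neg (by omega), if_neg (by omega)]
      rw [show k + 1 - c = 0 by omega, pow_succ]
      ring
    · rw [if_neg (by omega), if_neg (by omega), if_neg (by omega), if_neg (by omega)]
      rw [show k + 1 - c = (k - c) + 1 by omega, pow_succ, pow_succ]
      ring

lemma polyA_pow_apply (m : ℕ) :
    ∀ k : ℕ, 1 ≤ k → k ≤ m → ∀ i j : Fin m,
      (polyA m ^ k) i j =
        if j.val < k then polyF (k - j.val) (m - i.val)
        else if j.val = i.val + k then 1 else 0 := by
  intro k
  induction k with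
  | zero => omega
  | succ k ih =>
    intro _ hkm i j
    have him := i.isLt
    have hjlt := j.isLt
    rcases Nat.eq_zero_or_pos k with hk0 | hk0
    · subst hk0
      rw [pow_one]
      show (if j.val = 0 then 1 else if j.val = i.val + 1 then (1:ℤ) else 0) = _
      by_cases hj : j.val = 0
      · rw [if_pos hj, if_pos (show j.val < 0 + 1 by omega)]
        unfold polyF
        rw [if_pos (show 0 + 1 - j.val ≤ m - i.val by omega), hj]
        norm_num
      · rw [if_neg hj, if_neg (show ¬ j.val < 0 + 1 by omega)]
    · rw [pow_succ, Matrix.mul_apply]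
      by_cases hj : j.val = 0
      · -- last step goes via column 0 (all ones)
        have hA : ∀ l : Fin m, polyA m l j = 1 := fun l => by
          show (if j.val = 0 then 1 else _) = 1
          rw [if_pos hj]
        have hrow := ih hk0 (by omega) i
        calc (∑ l, (polyA m ^ k) i l * polyA m l j)
            = ∑ l : Fin m, (if l.val < k then polyF (k - l.val) (m - i.val)
                else if l.val = i.val + k then 1 else 0) := by
              refine Finset.sum_congr rfl fun l _ => ?_
              rw [hA l, mul_one, hrow l]
          _ = ∑ n ∈ Finset.range m, (if n < k then polyF (k - n) (m - i.val)
                else if n = i.val + k then 1 else 0) :=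
              Fin.sum_univ_eq_sum_range
                (fun n => if n < k then polyF (k - n) (m - i.val)
                  else if n = i.val + k then 1 else 0) m
          _ = (∑ n ∈ Finset.range k, (if n < k then polyF (k - n) (m - i.val)
                else if n = i.val + k then 1 else 0))
              + ∑ n ∈ Finset.Ico k m, (if n < k then polyF (k - n) (m - i.val)
                else if n = i.val + k then 1 else 0) :=
              (Finset.sum_range_add_sum_Ico _ (by omega)).symm
          _ = (∑ n ∈ Finset.range k, polyF (k - n) (m - i.val))
              + ∑ n ∈ Finset.Ico k m, (if n = i.val + k then (1:ℤ) else 0) := by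
              congr 1
              · exact Finset.sum_congr rfl fun n hn =>
                  if_pos (Finset.mem_range.mp hn)
              · refine Finset.sum_congr rfl fun n hn => ?_
                rw [if_neg (by have := (Finset.mem_Ico.mp hn).1; omega)]
          _ = (∑ n ∈ Finset.range k, polyF (n + 1) (m - i.val))
              + ∑ n ∈ Finset.Ico k m, (if n = i.val + k then (1:ℤ) else 0) := by
              congr 1
              rw [← Finset.sum_range_reflect]
              refine Finset.sum_congr rfl fun n hn => ?_
              have hn' := Finset.mem_range.mp hn
              congr 1
              omega
          _ = (∑ n ∈ Finset.range k, polyF (n + 1) (m - i.val))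
              + (if k < m - i.val then 1 else 0) := by
              congr 1
              rw [Finset.sum_ite_eq' (Finset.Ico k m) (i.val + k) (fun _ => (1:ℤ))]
              have hiff : i.val + k ∈ Finset.Ico k m ↔ k < m - i.val := by
                rw [Finset.mem_Ico]; omega
              by_cases h : k < m - i.val
              · rw [if_pos (hiff.mpr h), if_pos h]
              · rw [if_neg (fun hh => h (hiff.mp hh)), if_neg h]
          _ = polyF (k + 1) (m - i.val) := sumF (m - i.val) (by omega) k
          _ = _ := by
              rw [if_pos (show j.val < k + 1 by omega), hj]
              norm_num
      · -- last step comes from position j - 1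
        have hjm : j.val - 1 < m := by omega
        set l0 : Fin m := ⟨j.val - 1, hjm⟩ with hl0
        have hl0v : (l0 : ℕ) = j.val - 1 := rfl
        have hA : ∀ l : Fin m, polyA m l j = if l = l0 then 1 else 0 := fun l => by
          show (if j.val = 0 then 1 else if j.val = l.val + 1 then (1:ℤ) else 0) = _
          rw [if_neg hj]
          have hiff : (l = l0) ↔ (j.val = l.val + 1) := by
            rw [Fin.ext_iff]
            show l.val = j.val - 1 ↔ _
            omega
          by_cases h : j.val = l.val + 1
          · rw [if_pos h, if_pos (hiff.mpr h)]
          · rw [if_neg h, if_neg (fun hh => h (hiff.mp hh))]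
        have hsum : (∑ l, (polyA m ^ k) i l * polyA m l j) = (polyA m ^ k) i l0 := by
          rw [Finset.sum_congr rfl fun l _ => by
            rw [hA l, mul_ite, mul_one, mul_zero]]
          rw [Finset.sum_ite_eq' Finset.univ l0 (fun l => (polyA m ^ k) i l),
            if_pos (Finset.mem_univ l0)]
        rw [hsum, ih hk0 (by omega) i l0]
        split_ifs <;> first | rfl | omega | (congr 1 <;> omega)

lemma geo_sum_two (k : ℕ) : ∑ n ∈ Finset.range k, (2:ℤ) ^ n = 2 ^ k - 1 := by
  induction k with
  | zero => simp
  | succ k ih => rw [Finset.sum_range_succ, ih, pow_succ]; ring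

lemma polyA_trace (m k : ℕ) (hk1 : 1 ≤ k) (hkm : k ≤ m) :
    ((polyA m) ^ k).trace = 2 ^ k - 1 := by
  have hdiag : ∀ i : Fin m, (polyA m ^ k).diag i
      = if i.val < k then (2:ℤ) ^ (k - i.val - 1) else 0 := by
    intro i
    have him := i.isLt
    rw [Matrix.diag_apply, polyA_pow_apply m k hk1 hkm i i]
    by_cases h : i.val < k
    · rw [if_pos h, if_pos h]
      unfold polyF
      rw [if_pos (show k - i.val ≤ m - i.val by omega)]
      norm_num
    · rw [if_neg h, if_neg h, if_neg (by omega)]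
  rw [Matrix.trace]
  calc (∑ i, (polyA m ^ k).diag i)
      = ∑ i : Fin m, (if i.val < k then (2:ℤ) ^ (k - i.val - 1) else 0) :=
        Finset.sum_congr rfl fun i _ => hdiag i
    _ = ∑ n ∈ Finset.range m, (if n < k then (2:ℤ) ^ (k - n - 1) else 0) :=
        Fin.sum_univ_eq_sum_range (fun n => if n < k then (2:ℤ) ^ (k - n - 1) else 0) m
    _ = (∑ n ∈ Finset.range k, (if n < k then (2:ℤ) ^ (k - n - 1) else 0))
        + ∑ n ∈ Finset.Ico k m, (if n < k then (2:ℤ) ^ (k - n - 1) else 0) :=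
        (Finset.sum_range_add_sum_Ico _ hkm).symm
    _ = (∑ n ∈ Finset.range k, (2:ℤ) ^ (k - n - 1)) + 0 := by
        congr 1
        · exact Finset.sum_congr rfl fun n hn => if_pos (Finset.mem_range.mp hn)
        · exact Finset.sum_eq_zero fun n hn =>
            if_neg (by have := (Finset.mem_Ico.mp hn).1; omega)
    _ = ∑ n ∈ Finset.range k, (2:ℤ) ^ n := by
        rw [add_zero, ← Finset.sum_range_reflect]
        refine Finset.sum_congr rfl fun n hn => ?_
        have hn' := Finset.mem_range.mp hn
        congr 1
        omega
    _ = 2 ^ k - 1 := geo_sum_two k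

theorem polyA_trace_pow_eq (m : ℕ) (hm : 1 ≤ m) (k : ℕ) (hk1 : 1 ≤ k) (hk2 : k ≤ m) :
    ((polyA m) ^ k).trace = ((polyA k) ^ k).trace := by
  rw [polyA_trace m k hk1 hk2, polyA_trace k k hk1 le_rfl]
end

section
/- For every integer m ≥ 1, trace(A_m^m) = 2^m − 1. -/
section aux
variable {m : ℕ}

lemma polyA_mulVec_apply (hm : 0 < m) (v : Fin m → ℤ) (i : Fin m) :
    (polyA m).mulVec v i = v ⟨0, hm⟩ + (if h : i.val + 1 < m then v ⟨i.val + 1, h⟩ else 0) := by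
  unfold polyA Matrix.mulVec dotProduct
  simp only [Matrix.of_apply]
  have key : ∀ j : Fin m,
      (if (j : ℕ) = 0 then (1:ℤ) else if (j:ℕ) = i.val + 1 then 1 else 0) * v j
        = (if j = ⟨0, hm⟩ then v j else 0)
          + (if h : i.val + 1 < m then (if j = ⟨i.val+1, h⟩ then v j else 0) else 0) := by
    intro j
    by_cases h0 : (j : ℕ) = 0
    · have : j = ⟨0, hm⟩ := Fin.ext h0
      subst this
      simp [h0]
    · by_cases h1 : (j : ℕ) = i.val + 1
      · have hlt : i.val + 1 < m := h1 ▸ j.isLt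
        have : j = ⟨i.val+1, hlt⟩ := Fin.ext h1
        subst this
        simp [h0, h1, hlt, Fin.ext_iff]
      · simp [h0, h1, Fin.ext_iff]
  rw [Finset.sum_congr rfl (fun j _ => key j), Finset.sum_add_distrib]
  congr 1
  · simp
  · by_cases h : i.val + 1 < m <;> simp [h]
end aux

section aux2
variable {m : ℕ}

lemma polyA_mulVec_single_succ (j : Fin m) (hj : (j:ℕ) ≠ 0) :
    (polyA m).mulVec (Pi.single j 1) = Pi.single (⟨j.val - 1, lt_of_le_of_lt (Nat.sub_le _ _) j.isLt⟩ : Fin m) 1 := by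
  have hm : 0 < m := j.pos
  funext i
  rw [polyA_mulVec_apply hm]
  by_cases h : i.val + 1 < m
  · simp only [h, dif_pos, Pi.single_apply, Fin.ext_iff, Fin.val_mk]
    split_ifs <;> omega
  · simp only [h, dif_neg, not_false_iff, Pi.single_apply, Fin.ext_iff, Fin.val_mk]
    split_ifs <;> omega

lemma polyA_mulVec_single_zero (hm : 0 < m) :
    (polyA m).mulVec (Pi.single (⟨0, hm⟩ : Fin m) 1) = fun _ => 1 := by
  funext i
  rw [polyA_mulVec_apply hm]
  by_cases h : i.val + 1 < m
  · simp only [h, dif_pos, Pi.single_apply, Fin.ext_iff, Fin.val_mk]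
    split_ifs <;> simp_all
  · simp only [h, dif_neg, not_false_iff, Pi.single_apply, Fin.ext_iff, Fin.val_mk]
    split_ifs <;> simp_all

lemma polyA_pow_mulVec_single (k : ℕ) (j : Fin m) (hk : k ≤ j.val) :
    ((polyA m) ^ k).mulVec (Pi.single j 1)
      = Pi.single (⟨j.val - k, lt_of_le_of_lt (Nat.sub_le _ _) j.isLt⟩ : Fin m) 1 := by
  induction k with
  | zero =>
    rw [pow_zero, Matrix.one_mulVec]
    congr 1
  | succ n ih =>
    rw [pow_succ', ← Matrix.mulVec_mulVec, ih (by omega),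
      polyA_mulVec_single_succ _ (by simp only [Fin.val_mk]; omega)]
    congr 1

lemma polyA_pow_mulVec_one (ℓ : ℕ) (i : Fin m) (h : i.val + ℓ + 1 ≤ m) :
    ((polyA m) ^ ℓ).mulVec (fun _ => 1) i = 2 ^ ℓ := by
  induction ℓ generalizing i with
  | zero => simp [Matrix.one_mulVec]
  | succ n ih =>
    have hm : 0 < m := i.pos
    rw [pow_succ', ← Matrix.mulVec_mulVec, polyA_mulVec_apply hm]
    have h1 : i.val + 1 < m := by omega
    rw [dif_pos h1, ih ⟨0, hm⟩ (by simp only [Fin.val_mk]; omega),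
      ih ⟨i.val + 1, h1⟩ (by simp only [Fin.val_mk]; omega)]
    ring
end aux2

lemma geom_two_sum (n : ℕ) : ∑ k ∈ Finset.range n, (2:ℤ) ^ k = 2 ^ n - 1 := by
  induction n with
  | zero => simp
  | succ n ih => rw [Finset.sum_range_succ, ih, pow_succ]; ring

theorem polyA_trace_pow_self (m : ℕ) (hm : 1 ≤ m) :
    ((polyA m) ^ m).trace = 2 ^ m - 1 := by
  have hdiag : ∀ i : Fin m, ((polyA m) ^ m) i i = 2 ^ (m - 1 - i.val) := by
    intro i
    have h1 : ((polyA m) ^ (i.val + 1)).mulVec (Pi.single i 1) = fun _ => (1:ℤ) := by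
      rw [pow_succ', ← Matrix.mulVec_mulVec, polyA_pow_mulVec_single i.val i le_rfl]
      have he : (⟨i.val - i.val, lt_of_le_of_lt (Nat.sub_le _ _) i.isLt⟩ : Fin m) = ⟨0, hm⟩ :=
        Fin.ext (by simp)
      rw [he, polyA_mulVec_single_zero hm]
    have hsplit : (polyA m) ^ m = (polyA m) ^ (m - 1 - i.val) * (polyA m) ^ (i.val + 1) := by
      rw [← pow_add]
      congr 1
      omega
    have h2 : ((polyA m) ^ m).mulVec (Pi.single i 1) i = 2 ^ (m - 1 - i.val) := by
      rw [hsplit, ← Matrix.mulVec_mulVec, h1]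
      exact polyA_pow_mulVec_one _ i (by omega)
    rw [Matrix.mulVec_single] at h2
    simpa using h2
  rw [Matrix.trace]
  simp only [Matrix.diag]
  rw [Finset.sum_congr rfl (fun i _ => hdiag i), Fin.sum_univ_eq_sum_range (fun k => (2:ℤ) ^ (m - 1 - k)) m,
    Finset.sum_range_reflect, geom_two_sum]
end

section
/- For every integer m ≥ 1, trace(B_m^m) = 2m − 1. -/
set_option maxHeartbeats 1000000

/-- The matrix `B_m`, the inverse of the Polynacci matrix: `B[1][m] = 1`,
`B[i][m] = -1` for `2 ≤ i ≤ m`, `B[i][i-1] = 1` for `2 ≤ i ≤ m`, other entries zero. -/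
def polyB (m : ℕ) : Matrix (Fin m) (Fin m) ℤ :=
  Matrix.of fun i j =>
    if i.val = 0 then (if j.val = m - 1 then 1 else 0)
    else if j.val = m - 1 then -1
    else if j.val + 1 = i.val then 1 else 0

/-- Explicit form of `polyB m ^ k` for `1 ≤ k ≤ m`. -/
def polyD (m k : ℕ) : Matrix (Fin m) (Fin m) ℤ :=
  Matrix.of fun i j =>
    if j.val + k < m then (if i.val = j.val + k then 1 else 0)
    else if j.val + k = m then (if i.val = 0 then 1 else -1)
    else if i.val = j.val + k - m then 2
    else if i.val + 1 = j.val + k - m then -1 else 0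

lemma B_mul (m : ℕ) (hm : 1 ≤ m) (D : Matrix (Fin m) (Fin m) ℤ) (i j : Fin m) :
    (polyB m * D) i j =
      if i.val = 0 then D ⟨m-1, by omega⟩ j
      else D ⟨i.val - 1, by omega⟩ j - D ⟨m-1, by omega⟩ j := by
  rw [Matrix.mul_apply]
  by_cases h : i.val = 0
  · simp only [h, if_true]
    have key : ∀ l : Fin m, polyB m i l * D l j =
        if l = (⟨m-1, by omega⟩ : Fin m) then D l j else 0 := by
      intro l
      simp only [polyB, Matrix.of_apply, h, if_true, Fin.ext_iff]
      split_ifs <;> simp_all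
    rw [Finset.sum_congr rfl (fun l _ => key l), Finset.sum_ite_eq']
    simp
  · simp only [h, if_false]
    have key : ∀ l : Fin m, polyB m i l * D l j =
        (if l = (⟨i.val-1, by omega⟩ : Fin m) then D l j else 0)
        + (if l = (⟨m-1, by omega⟩ : Fin m) then -D l j else 0) := by
      intro l
      simp only [polyB, Matrix.of_apply, h, if_false, Fin.ext_iff]
      have : i.val ≤ m - 1 := by omega
      split_ifs <;> simp_all <;> omega
    rw [Finset.sum_congr rfl (fun l _ => key l), Finset.sum_add_distrib,
      Finset.sum_ite_eq', Finset.sum_ite_eq']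
    simp
    ring

lemma pow_eq_polyD (m : ℕ) (hm : 1 ≤ m) :
    ∀ k, 1 ≤ k → k ≤ m → polyB m ^ k = polyD m k := by
  intro k
  induction k with
  | zero => omega
  | succ n ih =>
    intro _ hkm
    rcases Nat.eq_or_lt_of_le (show 1 ≤ n + 1 from by omega) with h1 | h1
    · -- base case k = 1
      have hn : n = 0 := by omega
      subst hn
      rw [zero_add, pow_one]
      ext i j
      simp only [polyB, polyD, Matrix.of_apply]
      split_ifs <;> omega
    · have hn1 : 1 ≤ n := by omega
      have hnm : n ≤ m := by omega
      rw [pow_succ', ih hn1 hnm]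
      ext i j
      rw [B_mul m hm]
      have hi : i.val < m := i.isLt
      have hj : j.val < m := j.isLt
      have hm2 : 2 ≤ m := by omega
      simp only [polyD, Matrix.of_apply, Fin.val_mk]
      split_ifs <;> omega

theorem polyB_trace_pow_self (m : ℕ) (hm : 1 ≤ m) :
    ((polyB m) ^ m).trace = 2 * (m : ℤ) - 1 := by
  rw [pow_eq_polyD m hm m hm le_rfl]
  unfold Matrix.trace Matrix.diag
  have key : ∀ j : Fin m, polyD m m j j =
      2 + (if j = (⟨0, by omega⟩ : Fin m) then -1 else 0) := by
    intro j
    have hj : j.val < m := j.isLt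
    simp only [polyD, Matrix.of_apply, Fin.ext_iff]
    split_ifs <;> omega
  rw [Finset.sum_congr rfl (fun j _ => key j), Finset.sum_add_distrib,
    Finset.sum_ite_eq']
  simp
  ring
end

section
/- For every integer m ≥ 1, the inverted generalized Polynacci sequence Û_n^(m) := −trace(B_m^{n+1}) satisfies, as an identity of formal power series over ℤ: (∑_{n≥0} Û_n^(m) x^n) · (1 + x + x² + ⋯ + x^{m−1} − x^m) = 1 + 2x + 3x² + ⋯ + (m−1)x^{m−2} − m x^{m−1}, i.e. the product equals ∑_{j=1}^{m−1} j x^{j−1} − m x^{m−1}. -/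
set_option maxHeartbeats 1000000

def polyP (m k : ℕ) : Matrix (Fin m) (Fin m) ℤ := Matrix.of fun i j =>
  if j.val + k < m then (if i.val = j.val + k then 1 else 0)
  else (if i.val + m = j.val + k then 2 else 0) -
    (if j.val + k = m then 1 else if i.val + m + 1 = j.val + k then 1 else 0)

lemma polyB_mul_apply {m : ℕ} (hm : 1 ≤ m) (M : Matrix (Fin m) (Fin m) ℤ) (i j : Fin m) :
    (polyB m * M) i j =
      if i.val = 0 then M ⟨m-1, by omega⟩ j
      else M ⟨i.val - 1, by omega⟩ j - M ⟨m-1, by omega⟩ j := by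
  rw [Matrix.mul_apply]
  by_cases hi : i.val = 0
  · rw [if_pos hi]
    rw [Fintype.sum_eq_single (⟨m-1, by omega⟩ : Fin m)]
    · simp [polyB, hi]
    · intro l hl
      have : l.val ≠ m - 1 := fun h => hl (Fin.ext h)
      simp [polyB, hi, this]
  · rw [if_neg hi]
    have him : i.val < m := i.2
    by_cases h1 : (⟨i.val - 1, by omega⟩ : Fin m) = (⟨m-1, by omega⟩ : Fin m)
    · exfalso
      have := congrArg Fin.val h1
      simp at this; omega
    · rw [Fintype.sum_eq_add (⟨i.val - 1, by omega⟩ : Fin m) (⟨m-1, by omega⟩ : Fin m) h1]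
      · have h2 : (i.val - 1) + 1 = i.val := by omega
        have h3 : i.val - 1 ≠ m - 1 := by
          intro h; exact h1 (Fin.ext h)
        simp [polyB, hi, h2, h3]
        ring
      · intro l hl
        have hl1 : l.val ≠ i.val - 1 := fun h => hl.1 (Fin.ext h)
        have hl2 : l.val ≠ m - 1 := fun h => hl.2 (Fin.ext h)
        have : ¬ (l.val + 1 = i.val) := by omega
        simp [polyB, hi, hl2, this]

lemma polyB_pow {m : ℕ} (hm : 1 ≤ m) : ∀ k, k ≤ m → polyB m ^ k = polyP m k := by
  intro k
  induction k with
  | zero =>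
    intro _
    ext i j
    have hi := i.2; have hj := j.2
    simp only [pow_zero, polyP, Matrix.of_apply, Matrix.one_apply, Fin.ext_iff]
    split_ifs <;> omega
  | succ k ih =>
    intro hk
    rw [pow_succ', ih (by omega)]
    ext i j
    rw [polyB_mul_apply hm]
    have hi := i.2; have hj := j.2
    simp only [polyP, Matrix.of_apply]
    split_ifs <;> omega


lemma trace_polyB_pow {m : ℕ} (hm : 1 ≤ m) {k : ℕ} (h1 : 1 ≤ k) (h2 : k ≤ m - 1) :
    (polyB m ^ k).trace = -1 := by
  rw [polyB_pow hm k (by omega), Matrix.trace]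
  have : ∀ i : Fin m, (polyP m k).diag i = if i = (⟨m - k, by omega⟩ : Fin m) then -1 else 0 := by
    intro i
    have hi := i.2
    simp only [Matrix.diag, polyP, Matrix.of_apply, Fin.ext_iff]
    split_ifs <;> omega
  rw [Finset.sum_congr rfl fun i _ => this i, Finset.sum_ite_eq']
  simp

lemma sum_shift_ind (m j c : ℕ) (a : ℤ) :
    ∑ k ∈ Finset.Icc 1 m, (if k + j = c then a else 0) =
      if j + 1 ≤ c ∧ c ≤ j + m then a else 0 := by
  have h : ∀ k, (if k + j = c then a else 0) = if j ≤ c ∧ k = c - j then a else 0 := by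
    intro k; split_ifs <;> omega
  rw [Finset.sum_congr rfl fun k _ => h k]
  by_cases hjc : j ≤ c
  · simp only [hjc, true_and, Finset.sum_ite_eq', Finset.mem_Icc]
    split_ifs <;> simp_all <;> omega
  · simp only [hjc, false_and, if_false, Finset.sum_const_zero]
    split_ifs with h' <;> [omega; rfl]

lemma polyB_sum_pow {m : ℕ} (hm : 1 ≤ m) :
    ∑ k ∈ Finset.Icc 1 m, polyB m ^ k = 1 := by
  ext i j
  rw [Matrix.sum_apply, Finset.sum_congr rfl
    (fun k hk => by rw [polyB_pow hm k (Finset.mem_Icc.mp hk).2])]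
  have hi := i.2; have hj := j.2
  have key : ∀ k : ℕ, polyP m k i j =
      (if k + j.val = i.val then 1 else 0) + (if k + j.val = i.val + m then 2 else 0)
      - (if k + j.val = m then 1 else 0) - (if k + j.val = i.val + m + 1 then 1 else 0) := by
    intro k
    simp only [polyP, Matrix.of_apply]
    split_ifs <;> omega
  rw [Finset.sum_congr rfl fun k _ => key k]
  simp only [Finset.sum_sub_distrib, Finset.sum_add_distrib, sum_shift_ind]
  rw [Matrix.one_apply]
  simp only [Fin.ext_iff]
  split_ifs <;> omega

lemma trace_shift {m : ℕ} (hm : 1 ≤ m) (d : ℕ) :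
    ∑ r ∈ Finset.Icc 1 m, (polyB m ^ (d + r)).trace = (polyB m ^ d).trace := by
  conv_rhs => rw [← mul_one (polyB m ^ d), ← polyB_sum_pow hm]
  rw [Finset.mul_sum, Matrix.trace_sum]
  exact Finset.sum_congr rfl fun r _ => by rw [← pow_add]

lemma sum_Icc_reflect (M : ℕ) (f : ℕ → ℤ) :
    ∑ j ∈ Finset.Icc 1 M, f j = ∑ j ∈ Finset.Icc 1 M, f (M + 1 - j) := by
  refine Finset.sum_nbij' (fun a => M + 1 - a) (fun a => M + 1 - a) ?_ ?_ ?_ ?_ ?_ <;>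
    intro a ha <;> simp only [Finset.mem_Icc] at * <;> try omega
  congr 1; omega

lemma Icc_succ_top' (m : ℕ) (hm : 1 ≤ m) (f : ℕ → ℤ) :
    ∑ j ∈ Finset.Icc 1 m, f j = ∑ j ∈ Finset.Icc 1 (m - 1), f j + f m := by
  conv_lhs => rw [show m = (m - 1) + 1 from by omega]
  rw [Finset.sum_Icc_succ_top (by omega), show m - 1 + 1 = m from by omega]

open PowerSeries in
theorem inverted_polynacci_ogf (m : ℕ) (hm : 1 ≤ m) :
    (PowerSeries.mk fun n => -((polyB m) ^ (n + 1)).trace) *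
        (1 + (∑ j ∈ Finset.Icc 1 (m - 1), (X : ℤ⟦X⟧) ^ j) - (X : ℤ⟦X⟧) ^ m) =
      (∑ j ∈ Finset.Icc 1 (m - 1), PowerSeries.C (R := ℤ) (j : ℤ) * (X : ℤ⟦X⟧) ^ (j - 1)) -
        PowerSeries.C (R := ℤ) (m : ℤ) * (X : ℤ⟦X⟧) ^ (m - 1) := by
  ext n
  rw [mul_sub, mul_add, mul_one, Finset.mul_sum]
  simp only [map_sub, map_add, map_sum, PowerSeries.coeff_mk,
    PowerSeries.coeff_mul_X_pow', PowerSeries.coeff_C]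
  rcases lt_trichotomy n (m - 1) with hn | hn | hn
  · -- n ≤ m - 2
    have hrhs1 : ∀ j ∈ Finset.Icc 1 (m - 1),
        (if j - 1 ≤ n then (if n - (j - 1) = 0 then (j : ℤ) else 0) else 0) =
          if j = n + 1 then (n : ℤ) + 1 else 0 := by
      intro j hj
      rw [Finset.mem_Icc] at hj
      split_ifs <;> omega
    rw [Finset.sum_congr rfl hrhs1, Finset.sum_ite_eq' (Finset.Icc 1 (m-1))]
    have hmem : n + 1 ∈ Finset.Icc 1 (m - 1) := Finset.mem_Icc.mpr (by omega)
    rw [if_pos hmem, if_neg (by omega : ¬ m ≤ n), if_neg (by omega : ¬ m - 1 ≤ n)]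
    have hlhs1 : ∀ j ∈ Finset.Icc 1 (m - 1),
        (if j ≤ n then -(polyB m ^ (n - j + 1)).trace else 0) =
        (if j ≤ n then (1:ℤ) else 0) := by
      intro j hj
      rw [Finset.mem_Icc] at hj
      split_ifs with h
      · rw [trace_polyB_pow hm (by omega) (by omega)]; ring
      · rfl
    rw [Finset.sum_congr rfl hlhs1, Finset.sum_ite, Finset.sum_const_zero,
      Finset.sum_const, trace_polyB_pow hm (by omega) (by omega)]
    have : (Finset.Icc 1 (m-1)).filter (· ≤ n) = Finset.Icc 1 n := by
      ext x; simp only [Finset.mem_filter, Finset.mem_Icc]; omega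
    rw [this, Nat.card_Icc]
    push_cast
    ring_nf
  · -- n = m - 1
    subst hn
    rw [if_neg (by omega : ¬ m ≤ m - 1), if_pos (le_refl (m-1)),
      if_pos (by omega : m - 1 - (m - 1) = 0)]
    have hrhs1 : ∀ j ∈ Finset.Icc 1 (m - 1),
        (if j - 1 ≤ m - 1 then (if m - 1 - (j - 1) = 0 then (j : ℤ) else 0) else 0) = 0 := by
      intro j hj
      rw [Finset.mem_Icc] at hj
      split_ifs <;> omega
    rw [Finset.sum_congr rfl hrhs1, Finset.sum_const_zero, zero_sub]
    have hlhs1 : ∀ j ∈ Finset.Icc 1 (m - 1),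
        (if j ≤ m - 1 then -(polyB m ^ (m - 1 - j + 1)).trace else 0) =
        -(polyB m ^ ((m - 1) + 1 - j)).trace := by
      intro j hj
      rw [Finset.mem_Icc] at hj
      rw [if_pos hj.2, show m - 1 - j + 1 = (m - 1) + 1 - j from by omega]
    rw [Finset.sum_congr rfl hlhs1, ← sum_Icc_reflect (m-1) (fun j => -(polyB m ^ j).trace),
      sub_zero, show m - 1 + 1 = m from by omega]
    have h2 := Icc_succ_top' m hm (fun j => (polyB m ^ j).trace)
    have h3 : ∑ j ∈ Finset.Icc 1 m, ((polyB m ^ j)).trace = (m : ℤ) := by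
      rw [← Matrix.trace_sum, polyB_sum_pow hm, Matrix.trace_one]
      simp
    have h4 : ∑ j ∈ Finset.Icc 1 (m - 1), -((polyB m ^ j)).trace =
        -∑ j ∈ Finset.Icc 1 (m - 1), ((polyB m ^ j)).trace := by
      rw [Finset.sum_neg_distrib]
    simp only [h2] at h3
    rw [h4]
    linarith
  · -- n ≥ m
    rw [if_pos (by omega : m ≤ n), if_pos (by omega : m - 1 ≤ n),
      if_neg (by omega : ¬ n - (m - 1) = 0)]
    have hrhs1 : ∀ j ∈ Finset.Icc 1 (m - 1),
        (if j - 1 ≤ n then (if n - (j - 1) = 0 then (j : ℤ) else 0) else 0) = 0 := by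
      intro j hj
      rw [Finset.mem_Icc] at hj
      split_ifs <;> omega
    rw [Finset.sum_congr rfl hrhs1, Finset.sum_const_zero, sub_zero]
    have hlhs1 : ∀ j ∈ Finset.Icc 1 (m - 1),
        (if j ≤ n then -(polyB m ^ (n - j + 1)).trace else 0) =
        -(polyB m ^ ((n + 1 - m) + ((m - 1) + 1 - j))).trace := by
      intro j hj
      rw [Finset.mem_Icc] at hj
      rw [if_pos (by omega), show n - j + 1 = (n + 1 - m) + ((m - 1) + 1 - j) from by omega]
    rw [Finset.sum_congr rfl hlhs1,
      ← sum_Icc_reflect (m-1) (fun j => -(polyB m ^ ((n + 1 - m) + j)).trace)]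
    have h2 := Icc_succ_top' m hm (fun j => (polyB m ^ (n - m + 1 + j)).trace)
    simp only [show n - m + 1 + m = n + 1 from by omega] at h2
    have h3 := trace_shift hm (n + 1 - m)
    simp only [show n + 1 - m = n - m + 1 from by omega] at h3
    have h4 : ∑ j ∈ Finset.Icc 1 (m - 1), -((polyB m ^ (n - m + 1 + j)).trace) =
        -∑ j ∈ Finset.Icc 1 (m - 1), ((polyB m ^ (n - m + 1 + j))).trace := by
      rw [Finset.sum_neg_distrib]
    rw [show n + 1 - m = n - m + 1 from by omega, h4]
    linarith
end
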